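/- First-order pattern-probing lemma: let P be a program without extra variables, and for each m ≥ 0 and symbol h let h_m be a fresh constructor of arity m. Define the map t ↦ t̂ on partial patterns by X̂ = X, ⊥̂ = bot (bot a fresh 0-ary constructor), and (h t1…tm)^ = h_m t̂1 … t̂m; then t̂ is always a first-order pattern. For each partial pattern t let g_t be a fresh unary function symbol with rules g_X U → U, g_⊥ X → bot, and g_{(h t1…tm)} (h X1…Xm) → h_m (g_{t1} X1) … (g_{tm} Xm), and set P' = P ⊎ P_{g_t}. Then P' is a safe extension of (P, e), and for every expression e and partial pattern t built with the signature of P: t ∈ ⟦e⟧^P if and only if t̂ ∈ ⟦g_t e⟧^{P'}. -/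

import Mathlib

/-- A signature: function symbols and constructor symbols, each with an arity. -/
structure Sig where
  FS : Type
  CS : Type
  arityF : FS → ℕ
  arityC : CS → ℕ

/-- Applicative partial expressions over a signature.  Variables are natural
numbers and `bot` is the distinguished 0-ary constructor `⊥`. -/
inductive Exp (σ : Sig) : Type where
  | var : ℕ → Exp σ
  | fn : σ.FS → Exp σ
  | cn : σ.CS → Exp σ
  | bot : Exp σ
  | app : Exp σ → Exp σ → Exp σ

variable {σ : Sig}

/-- `applyList e [e1, …, en]` is the curried application `e e1 … en`. -/
def applyList (e : Exp σ) (es : List (Exp σ)) : Exp σ := es.foldl Exp.app e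

/-- Partial patterns `Pat_⊥`. -/
inductive IsPPat : Exp σ → Prop where
  | var (x : ℕ) : IsPPat (Exp.var x)
  | bot : IsPPat (Exp.bot : Exp σ)
  | capp (c : σ.CS) (ts : List (Exp σ)) (har : ts.length ≤ σ.arityC c)
      (hts : ∀ t ∈ ts, IsPPat t) : IsPPat (applyList (Exp.cn c) ts)
  | fapp (f : σ.FS) (ts : List (Exp σ)) (har : ts.length < σ.arityF f)
      (hts : ∀ t ∈ ts, IsPPat t) : IsPPat (applyList (Exp.fn f) ts)

/-- The constructor `⊥` does not occur in the expression. -/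
def BotFree : Exp σ → Prop
  | .bot => False
  | .app a b => BotFree a ∧ BotFree b
  | _ => True

/-- Total patterns `Pat`. -/
def IsPat (t : Exp σ) : Prop := IsPPat t ∧ BotFree t

/-- First-order patterns `FOPat`. -/
inductive IsFOPat : Exp σ → Prop where
  | var (x : ℕ) : IsFOPat (Exp.var x)
  | capp (c : σ.CS) (ts : List (Exp σ)) (har : ts.length = σ.arityC c)
      (hts : ∀ t ∈ ts, IsFOPat t) : IsFOPat (applyList (Exp.cn c) ts)

/-- The list of occurrences of variables in an expression. -/
def occVars : Exp σ → List ℕ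
  | .var x => [x]
  | .app a b => occVars a ++ occVars b
  | _ => []

/-- Applying a substitution to an expression. -/
def subst (θ : ℕ → Exp σ) : Exp σ → Exp σ
  | .var x => θ x
  | .fn f => .fn f
  | .cn c => .cn c
  | .bot => .bot
  | .app a b => .app (subst θ a) (subst θ b)

/-- Partial-pattern substitutions `PSubst_⊥`. -/
def PSub (θ : ℕ → Exp σ) : Prop := ∀ x, IsPPat (θ x)

/-- A program rule `f t1 … tn → r` (the left-hand side is `f` applied to `lhs`). -/
structure Rule (σ : Sig) where
  fn : σ.FS
  lhs : List (Exp σ)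
  rhs : Exp σ

/-- Well-formedness of a rule: `f` is applied to as many arguments as its arity,
the arguments form a linear tuple of total patterns. -/
def Rule.WF (r : Rule σ) : Prop :=
  r.lhs.length = σ.arityF r.fn ∧ (∀ t ∈ r.lhs, IsPat t) ∧
    (r.lhs.flatMap occVars).Nodup

/-- The rule has no extra variables: all variables of the right-hand side occur
in the left-hand side. -/
def Rule.NoExtra (r : Rule σ) : Prop :=
  ∀ x ∈ occVars r.rhs, x ∈ r.lhs.flatMap occVars

abbrev Program (σ : Sig) := Set (Rule σ)

/-- A program without extra variables, all whose rules are well formed. -/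
def WFProg (P : Program σ) : Prop := ∀ r ∈ P, r.WF ∧ r.NoExtra

/-- `h ∈ Σ` (a function symbol, a constructor symbol, or `⊥`). -/
def IsSymb : Exp σ → Prop
  | .fn _ => True
  | .cn _ => True
  | .bot => True
  | _ => False

/-- HOCRWL derivation trees for statements `e ⇒ t`, with rules
(B), (RR), (DC) and (OR). -/
inductive DTree (P : Program σ) : Exp σ → Exp σ → Type where
  | bot (e : Exp σ) : DTree P e Exp.bot
  | rr (x : ℕ) : DTree P (Exp.var x) (Exp.var x)
  | dc (h : Exp σ) (es ts : List (Exp σ)) (hsym : IsSymb h)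
      (hlen : es.length = ts.length) (hpat : IsPPat (applyList h ts))
      (ds : ∀ p ∈ es.zip ts, DTree P p.1 p.2) :
      DTree P (applyList h es) (applyList h ts)
  | opr (r : Rule σ) (hr : r ∈ P) (θ : ℕ → Exp σ) (hθ : PSub θ)
      (es as : List (Exp σ)) (t : Exp σ) (hlen : es.length = r.lhs.length)
      (ds : ∀ p ∈ es.zip (r.lhs.map (subst θ)), DTree P p.1 p.2)
      (d : DTree P (applyList (subst θ r.rhs) as) t) :
      DTree P (applyList (Exp.fn r.fn) (es ++ as)) t

/-- `P ⊢ e ⇒ t` is derivable in the HOCRWL proof calculus. -/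
def Deriv (P : Program σ) (e t : Exp σ) : Prop := Nonempty (DTree P e t)

/-- The HOCRWL denotation `⟦e⟧^P = { t ∈ Pat_⊥ | P ⊢ e ⇒ t }`. -/
def den (P : Program σ) (e : Exp σ) : Set (Exp σ) := {t | IsPPat t ∧ Deriv P e t}

/-- Observations: total patterns in the denotation. -/
def Obs (P : Program σ) (e : Exp σ) : Set (Exp σ) := {t | t ∈ den P e ∧ BotFree t}

/-- First-order observations: first-order patterns in the denotation. -/
def ObsFO (P : Program σ) (e : Exp σ) : Set (Exp σ) := {t | t ∈ den P e ∧ IsFOPat t}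

/-- Contexts `C ::= [ ] | C e | e C`. -/
inductive Cntxt (σ : Sig) : Type where
  | hole : Cntxt σ
  | appL : Cntxt σ → Exp σ → Cntxt σ
  | appR : Exp σ → Cntxt σ → Cntxt σ

/-- Filling the hole of a context with an expression. -/
def Cntxt.fill : Cntxt σ → Exp σ → Exp σ
  | .hole, e => e
  | .appL C e', e => .app (C.fill e) e'
  | .appR e' C, e => .app e' (C.fill e)

/-- Function symbols occurring in an expression. -/
def expFS : Exp σ → Set σ.FS
  | .fn f => {f}
  | .app a b => expFS a ∪ expFS b
  | _ => ∅

/-- Function symbols occurring in a rule. -/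
def ruleFS (r : Rule σ) : Set σ.FS :=
  insert r.fn ((⋃ t ∈ r.lhs, expFS t) ∪ expFS r.rhs)

/-- Function symbols occurring in a program. -/
def progFS (P : Program σ) : Set σ.FS := ⋃ r ∈ P, ruleFS r

/-- Function symbols defined by a program (roots of left-hand sides). -/
def defs (P : Program σ) : Set σ.FS := Rule.fn '' P

/-- `P'` is a safe extension of `(P, e)`: `P' = P ⊎ P''` where `P''` defines no
function symbol occurring in `P` or in `e`. -/
def SafeExt (P P' : Program σ) (e : Exp σ) : Prop :=
  ∃ P'' : Program σ, P' = P ∪ P'' ∧ Disjoint P P'' ∧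
    Disjoint (defs P'') (expFS e ∪ progFS P)

/-- `e ∼ₙ e'` : `n`-extensional equivalence. -/
def ExtEquiv (P : Program σ) (n : ℕ) (e e' : Exp σ) : Prop :=
  ∀ es : List (Exp σ), es.length = n →
    den P (applyList e es) = den P (applyList e' es)

/-- The signature of `P` extended with a fresh 0-ary constructor `bot`, fresh
constructors `h_m` of arity `m` for every symbol `h ∈ FS ∪ CS` and every `m`,
and a fresh unary function symbol `g_t` for every (partial pattern) `t`. -/
def extSigFO (σ : Sig) : Sig where
  FS := σ.FS ⊕ Exp σ
  CS := (σ.CS ⊕ Unit) ⊕ ((σ.FS ⊕ σ.CS) × ℕ)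
  arityF := Sum.elim σ.arityF fun _ => 1
  arityC := Sum.elim (Sum.elim σ.arityC fun _ => 0) fun p => p.2

/-- The embedding of expressions of the original signature into the
extended one. -/
def embedFO : Exp σ → Exp (extSigFO σ)
  | .var x => .var x
  | .fn f => .fn (.inl f)
  | .cn c => .cn (.inl (.inl c))
  | .bot => .bot
  | .app a b => .app (embedFO a) (embedFO b)

/-- Auxiliary for `t ↦ t̂`: `hatFOAux e n` translates `e` knowing it is applied
to `n` further arguments, so that a head symbol `h` applied to `m` arguments
in total becomes the fresh constructor `h_m`. -/
def hatFOAux : Exp σ → ℕ → Exp (extSigFO σ)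
  | .var x, _ => .var x
  | .bot, _ => .cn (.inl (.inr ()))
  | .fn f, n => .cn (.inr (.inl f, n))
  | .cn c, n => .cn (.inr (.inr c, n))
  | .app a b, n => .app (hatFOAux a (n + 1)) (hatFOAux b 0)

/-- The transformation `t ↦ t̂`: `X̂ = X`, `⊥̂ = bot`,
`(h t1…tm)^ = h_m t̂1 … t̂m`. -/
def hatFO (t : Exp σ) : Exp (extSigFO σ) := hatFOAux t 0

def embedRuleFO (r : Rule σ) : Rule (extSigFO σ) :=
  ⟨.inl r.fn, r.lhs.map embedFO, embedFO r.rhs⟩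

def embedProgFO (P : Program σ) : Program (extSigFO σ) := embedRuleFO '' P

/-- The fresh function symbol `g_t`, as an expression. -/
def gEFO (t : Exp σ) : Exp (extSigFO σ) := .fn (.inr t)

/-- A symbol `h ∈ FS ∪ CS` as an expression. -/
def symExp : σ.FS ⊕ σ.CS → Exp σ := Sum.elim Exp.fn Exp.cn

/-- The rule `g_{h t1…tm} (h X1…Xm) → h_m (g_{t1} X1) … (g_{tm} Xm)`. -/
def gAppRuleFO (h : σ.FS ⊕ σ.CS) (ts : List (Exp σ)) : Rule (extSigFO σ) where
  fn := .inr (applyList (symExp h) ts)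
  lhs := [applyList (embedFO (symExp h)) ((List.range ts.length).map Exp.var)]
  rhs := applyList (Exp.cn (.inr (h, ts.length)))
      (ts.mapIdx fun i t => Exp.app (gEFO t) (Exp.var i))

/-- The program `P_{g_t}` consisting of the rules `g_X U → U`,
`g_⊥ X → bot` and `g_{h t1…tm} (h X1…Xm) → h_m (g_{t1} X1) … (g_{tm} Xm)`. -/
def PgFO (σ : Sig) : Program (extSigFO σ) :=
  {r | (∃ x : ℕ, r = ⟨.inr (.var x), [.var 0], .var 0⟩) ∨
       r = ⟨.inr .bot, [.var 0], .cn (.inl (.inr ()))⟩ ∨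
       ∃ (h : σ.FS ⊕ σ.CS) (ts : List (Exp σ)),
         IsPPat (applyList (symExp h) ts) ∧ r = gAppRuleFO h ts}

section Lemmas
variable {σ : Sig}

/-! ### applyList and spines -/

lemma applyList_cons (e a : Exp σ) (l : List (Exp σ)) :
    applyList e (a :: l) = applyList (.app e a) l := rfl

lemma applyList_append (e : Exp σ) (l1 l2 : List (Exp σ)) :
    applyList e (l1 ++ l2) = applyList (applyList e l1) l2 :=
  List.foldl_append

lemma applyList_concat (e : Exp σ) (l : List (Exp σ)) (a : Exp σ) :
    applyList e (l ++ [a]) = .app (applyList e l) a :=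
  applyList_append _ _ _

/-- head of an application spine -/
def sHead : Exp σ → Exp σ
  | .app a _ => sHead a
  | e => e

/-- arguments of an application spine -/
def sArgs : Exp σ → List (Exp σ)
  | .app a b => sArgs a ++ [b]
  | _ => []

/-- not an application -/
def NApp : Exp σ → Prop
  | .app _ _ => False
  | _ => True

lemma sHead_napp : ∀ e : Exp σ, NApp (sHead e)
  | .var _ | .fn _ | .cn _ | .bot => trivial
  | .app a _ => sHead_napp a

lemma sHead_eq_self {e : Exp σ} (h : NApp e) : sHead e = e := by
  cases e <;> first | rfl | exact absurd h (by simp [NApp])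

lemma sArgs_eq_nil {e : Exp σ} (h : NApp e) : sArgs e = [] := by
  cases e <;> first | rfl | exact absurd h (by simp [NApp])

lemma sHead_applyList (h : Exp σ) (l : List (Exp σ)) :
    sHead (applyList h l) = sHead h := by
  induction l generalizing h with
  | nil => rfl
  | cons a l ih => rw [applyList_cons, ih]; rfl

lemma sArgs_applyList (h : Exp σ) (l : List (Exp σ)) :
    sArgs (applyList h l) = sArgs h ++ l := by
  induction l generalizing h with
  | nil => simp [applyList]
  | cons a l ih => rw [applyList_cons, ih]; simp [sArgs]

lemma applyList_spine (e : Exp σ) : applyList (sHead e) (sArgs e) = e := by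
  induction e with
  | app a b iha ihb => rw [sHead, sArgs, applyList_concat, iha]
  | _ => rfl

lemma applyList_inj {h h' : Exp σ} (H : NApp h) (H' : NApp h') {l l' : List (Exp σ)}
    (heq : applyList h l = applyList h' l') : h = h' ∧ l = l' := by
  have h1 := congrArg sHead heq
  have h2 := congrArg sArgs heq
  rw [sHead_applyList, sHead_applyList, sHead_eq_self H, sHead_eq_self H'] at h1
  rw [sArgs_applyList, sArgs_applyList, sArgs_eq_nil H, sArgs_eq_nil H'] at h2
  simpa [h1] using h2

lemma napp_of_symb {h : Exp σ} (hs : IsSymb h) : NApp h := by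
  cases h <;> trivial

/-! ### pattern spine analysis -/

lemma isPPat_spine {h : Exp σ} (hh : NApp h) {l : List (Exp σ)}
    (hp : IsPPat (applyList h l)) :
    (∀ a ∈ l, IsPPat a) ∧
    (((∃ x, h = .var x) ∨ h = .bot) ∧ l = [] ∨
      (∃ c, h = .cn c ∧ l.length ≤ σ.arityC c) ∨
      (∃ f, h = .fn f ∧ l.length < σ.arityF f)) := by
  generalize he : applyList h l = e at hp
  cases hp with
  | var x =>
      obtain ⟨h1, h2⟩ := applyList_inj hh (by trivial)
        (heq := show applyList h l = applyList (Exp.var x) [] from he)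
      exact ⟨by simp [h2], Or.inl ⟨Or.inl ⟨x, h1⟩, h2⟩⟩
  | bot =>
      obtain ⟨h1, h2⟩ := applyList_inj hh (by trivial)
        (heq := show applyList h l = applyList (Exp.bot) [] from he)
      exact ⟨by simp [h2], Or.inl ⟨Or.inr h1, h2⟩⟩
  | capp c ts har hts =>
      obtain ⟨h1, h2⟩ := applyList_inj hh (by trivial) he
      subst h1; subst h2
      exact ⟨hts, Or.inr (Or.inl ⟨c, rfl, har⟩)⟩
  | fapp f ts har hts =>
      obtain ⟨h1, h2⟩ := applyList_inj hh (by trivial) he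
      subst h1; subst h2
      exact ⟨hts, Or.inr (Or.inr ⟨f, rfl, har⟩)⟩

lemma isPPat_build {h : Exp σ} {l : List (Exp σ)}
    (hl : ∀ a ∈ l, IsPPat a)
    (hc : ((∃ x, h = .var x) ∨ h = .bot) ∧ l = [] ∨
      (∃ c, h = .cn c ∧ l.length ≤ σ.arityC c) ∨
      (∃ f, h = .fn f ∧ l.length < σ.arityF f)) :
    IsPPat (applyList h l) := by
  rcases hc with ⟨hc, rfl⟩ | ⟨c, rfl, har⟩ | ⟨f, rfl, har⟩
  · rcases hc with ⟨x, rfl⟩ | rfl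
    · exact .var x
    · exact .bot
  · exact .capp c l har hl
  · exact .fapp f l har hl

lemma isPPat_app_inv {a b : Exp σ} (h : IsPPat (.app a b)) : IsPPat a ∧ IsPPat b := by
  have hd : Exp.app a b = applyList (sHead a) (sArgs a ++ [b]) := by
    rw [applyList_concat, applyList_spine]
  rw [hd] at h
  obtain ⟨hall, hc⟩ := isPPat_spine (sHead_napp a) h
  constructor
  · have : IsPPat (applyList (sHead a) (sArgs a)) := by
      apply isPPat_build (fun x hx => hall x (by simp [hx]))
      rcases hc with ⟨_, habs⟩ | ⟨c, hc, har⟩ | ⟨f, hf, har⟩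
      · simp at habs
      · exact Or.inr (Or.inl ⟨c, hc, by simp at har; omega⟩)
      · exact Or.inr (Or.inr ⟨f, hf, by simp at har; omega⟩)
    rwa [applyList_spine] at this
  · exact hall b (by simp)

lemma not_isPPat_app_bot {b : Exp σ} : ¬ IsPPat (.app .bot b) := by
  intro h
  have : Exp.app .bot b = applyList (.bot) [b] := rfl
  rw [this] at h
  obtain ⟨_, hc⟩ := isPPat_spine (by trivial) h
  rcases hc with ⟨_, habs⟩ | ⟨c, hc, _⟩ | ⟨f, hf, _⟩ <;> simp_all

end Lemmas
section Lemmas2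
variable {σ : Sig}

/-! ### approximation order -/

/-- approximation: `Le t p` iff `t` is `p` with some subterms replaced by `⊥`. -/
inductive Le : Exp σ → Exp σ → Prop
  | bot (e : Exp σ) : Le .bot e
  | refl (e : Exp σ) : Le e e
  | app {a a' b b' : Exp σ} : Le a a' → Le b b' → Le (.app a b) (.app a' b')

lemma zip_getElem_mem {α β : Type*} {l : List α} {l' : List β} {i : ℕ}
    (h1 : i < l.length) (h2 : i < l'.length) : (l[i], l'[i]) ∈ l.zip l' := by
  have : i < (l.zip l').length := by simp [List.length_zip]; omega
  have := List.getElem_mem this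
  rwa [List.getElem_zip] at this

lemma zip_mem_getElem {α β : Type*} {l : List α} {l' : List β} {p : α × β}
    (h : p ∈ l.zip l') : ∃ (i : ℕ) (h1 : i < l.length) (h2 : i < l'.length),
      p = (l[i], l'[i]) := by
  obtain ⟨i, hi, he⟩ := List.mem_iff_getElem.1 h
  rw [List.getElem_zip] at he
  simp [List.length_zip] at hi
  exact ⟨i, hi.1, hi.2, he.symm⟩

lemma le_applyList {h h' : Exp σ} (hh : Le h h') {l l' : List (Exp σ)}
    (hlen : l.length = l'.length)
    (hps : ∀ i (h1 : i < l.length) (h2 : i < l'.length), Le l[i] l'[i]) :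
    Le (applyList h l) (applyList h' l') := by
  induction l generalizing h h' l' with
  | nil => rw [List.length_nil] at hlen; rw [List.eq_nil_of_length_eq_zero hlen.symm]; exact hh
  | cons a l ih =>
      cases l' with
      | nil => simp at hlen
      | cons a' l'' =>
          rw [applyList_cons, applyList_cons]
          refine ih (Le.app hh (hps 0 (by simp) (by simp))) (by simpa using hlen) ?_
          intro i hi1 hi2
          exact hps (i+1) (by simpa using hi1) (by simpa using hi2)

lemma le_var_inv {t : Exp σ} {x : ℕ} (h : Le t (.var x)) : t = .bot ∨ t = .var x := by
  cases h <;> simp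

lemma le_bot_inv {t : Exp σ} (h : Le t .bot) : t = .bot := by cases h <;> rfl

lemma le_app_inv {t a b : Exp σ} (h : Le t (.app a b)) :
    t = .bot ∨ ∃ u v, t = .app u v ∧ Le u a ∧ Le v b := by
  cases h with
  | bot => exact Or.inl rfl
  | refl => exact Or.inr ⟨a, b, rfl, .refl a, .refl b⟩
  | app ha hb => exact Or.inr ⟨_, _, rfl, ha, hb⟩

lemma le_spine {h' : Exp σ} (hh : NApp h') {l' : List (Exp σ)} {t : Exp σ}
    (hle : Le t (applyList h' l')) (hp : IsPPat t) :
    t = .bot ∨ ∃ l, t = applyList h' l ∧ l.length = l'.length ∧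
      ∀ i (h1 : i < l.length) (h2 : i < l'.length), Le l[i] l'[i] := by
  induction l' using List.reverseRecOn generalizing t with
  | nil =>
      simp only [applyList] at hle ⊢
      cases h' with
      | var x => rcases le_var_inv hle with h | h <;> [exact Or.inl h;
          exact Or.inr ⟨[], h, rfl, by simp⟩]
      | bot => exact Or.inl (le_bot_inv hle)
      | app a b => exact absurd hh (by simp [NApp])
      | fn f =>
          cases hle with
          | bot => exact Or.inl rfl
          | refl => exact Or.inr ⟨[], rfl, rfl, by simp⟩
      | cn c =>
          cases hle with
          | bot => exact Or.inl rfl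
          | refl => exact Or.inr ⟨[], rfl, rfl, by simp⟩
  | append_singleton l'' a' ih =>
      rw [applyList_concat] at hle
      rcases le_app_inv hle with rfl | ⟨u, v, rfl, hu, hv⟩
      · exact Or.inl rfl
      · obtain ⟨hpu, hpv⟩ := isPPat_app_inv hp
        rcases ih hu hpu with rfl | ⟨l, rfl, hlen, hps⟩
        · exact absurd hp not_isPPat_app_bot
        · refine Or.inr ⟨l ++ [v], by rw [applyList_concat], by simp [hlen], ?_⟩
          intro i h1 h2
          simp only [List.length_append, List.length_singleton] at h1 h2
          rcases Nat.lt_or_ge i l.length with hi | hi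
          · rw [List.getElem_append_left hi, List.getElem_append_left (hlen ▸ hi)]
            exact hps i hi (hlen ▸ hi)
          · have hi1 : i = l.length := by omega
            subst hi1
            have e1 : (l ++ [v])[l.length]'(by simp) = v := by
              rw [List.getElem_append_right (le_refl _)]; simp
            have e2 : (l'' ++ [a'])[l.length]'(by simp; omega) = a' := by
              rw [List.getElem_append_right (by omega)]; simp [hlen]
            rw [e1, e2]; exact hv

/-! ### substitution and embedding -/

lemma subst_applyList (θ : ℕ → Exp σ) (e : Exp σ) (l : List (Exp σ)) :
    subst θ (applyList e l) = applyList (subst θ e) (l.map (subst θ)) := by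
  induction l generalizing e with
  | nil => rfl
  | cons a l ih => rw [applyList_cons, ih]; rfl

lemma embed_applyList (e : Exp σ) (l : List (Exp σ)) :
    embedFO (applyList e l) = applyList (embedFO e) (l.map embedFO) := by
  induction l generalizing e with
  | nil => rfl
  | cons a l ih => rw [applyList_cons, ih]; rfl

lemma embed_subst (θ : ℕ → Exp σ) (u : Exp σ) :
    embedFO (subst θ u) = subst (fun x => embedFO (θ x)) (embedFO u) := by
  induction u with
  | app a b iha ihb => simp only [subst, embedFO, iha, ihb]
  | _ => rfl

lemma embed_inj : ∀ {a b : Exp σ}, embedFO a = embedFO b → a = b := by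
  intro a
  induction a with
  | var x =>
      intro b h; cases b <;> simp only [embedFO, Exp.var.injEq] at h <;> try (simp at h)
      rw [h]
  | fn f =>
      intro b h
      cases b <;> simp only [embedFO, Exp.fn.injEq, Sum.inl.injEq] at h <;> try (simp at h)
      injection h with h1; injection h1 with h2; rw [h2]
  | cn c =>
      intro b h
      cases b <;> simp only [embedFO, Exp.cn.injEq, Sum.inl.injEq] at h <;> try (simp at h)
      injection h with h1; injection h1 with h2; injection h2 with h3; rw [h3]
  | bot =>
      intro b h; cases b <;> simp only [embedFO] at h <;> try (simp at h)
      rfl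
  | app a1 a2 ih1 ih2 =>
      intro b h
      cases b <;> simp only [embedFO, Exp.app.injEq] at h <;> try (simp at h)
      rw [ih1 h.1, ih2 h.2]

lemma occVars_embed (u : Exp σ) : occVars (embedFO u) = occVars u := by
  induction u with
  | app a b iha ihb => simp [embedFO, occVars, iha, ihb]
  | _ => rfl

lemma subst_congr {θ θ' : ℕ → Exp σ} {u : Exp σ}
    (h : ∀ x ∈ occVars u, θ x = θ' x) : subst θ u = subst θ' u := by
  induction u with
  | var x => exact h x (by simp [occVars])
  | app a b iha ihb =>
      simp only [subst]
      rw [iha fun x hx => h x (by simp [occVars, hx]),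
        ihb fun x hx => h x (by simp [occVars, hx])]
  | _ => rfl

lemma napp_embed {e : Exp σ} (h : NApp e) : NApp (embedFO e) := by
  cases e <;> trivial

lemma isPPat_embed {t : Exp σ} (h : IsPPat t) : IsPPat (embedFO t) := by
  induction h with
  | var x => exact .var x
  | bot => exact .bot
  | capp c ts har hts ih =>
      rw [embed_applyList]
      refine IsPPat.capp (Sum.inl (Sum.inl c)) (ts.map embedFO) ?_ ?_
      · rw [List.length_map]; simpa [extSigFO] using har
      · intro u hu; obtain ⟨v, hv, rfl⟩ := List.mem_map.1 hu; exact ih v hv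
  | fapp f ts har hts ih =>
      rw [embed_applyList]
      refine IsPPat.fapp (Sum.inl f) (ts.map embedFO) ?_ ?_
      · rw [List.length_map]; simpa [extSigFO] using har
      · intro u hu; obtain ⟨v, hv, rfl⟩ := List.mem_map.1 hu; exact ih v hv

/-- size of an expression (number of applications) -/
def esize : Exp σ → ℕ
  | .app a b => esize a + esize b + 1
  | _ => 0

lemma esize_sArgs_lt {t : Exp σ} : ∀ a ∈ sArgs t, esize a < esize t := by
  induction t with
  | app u v ihu ihv =>
      intro a ha
      rw [sArgs] at ha
      rcases List.mem_append.1 ha with h | h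
      · have := ihu a h; simp [esize]; omega
      · simp at h; subst h; simp [esize] <;> omega
  | _ => intro a ha; simp [sArgs] at ha

lemma isPPat_of_embed_aux : ∀ (n : ℕ) (t : Exp σ), esize t < n →
    IsPPat (embedFO t) → IsPPat t := by
  intro n
  induction n with
  | zero => intro t ht; omega
  | succ n ih =>
      intro t ht h
      rw [← applyList_spine t, embed_applyList] at h
      obtain ⟨hall, hc⟩ := isPPat_spine (napp_embed (sHead_napp t)) h
      rw [← applyList_spine t]
      apply isPPat_build
      · intro a ha
        exact ih a (by have := esize_sArgs_lt a ha; omega)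
          (hall (embedFO a) (List.mem_map_of_mem ha))
      · rcases hc with ⟨hc, hnil⟩ | ⟨c, hcn, har⟩ | ⟨f, hfn, har⟩
        · refine Or.inl ⟨?_, by simpa using hnil⟩
          rcases hc with ⟨x, hx⟩ | hx
          · cases hh : sHead t <;> rw [hh] at hx <;> simp only [embedFO] at hx <;>
              try (simp at hx)
            exact Or.inl ⟨_, rfl⟩
          · cases hh : sHead t <;> rw [hh] at hx <;> simp only [embedFO] at hx <;>
              try (simp at hx)
            exact Or.inr rfl
        · cases hh : sHead t <;> rw [hh] at hcn <;> simp only [embedFO] at hcn <;>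
            try (simp at hcn)
          rename_i c0
          refine Or.inr (Or.inl ⟨c0, rfl, ?_⟩)
          injection hcn with hcn; subst hcn
          rw [List.length_map] at har; simpa [extSigFO] using har
        · cases hh : sHead t <;> rw [hh] at hfn <;> simp only [embedFO] at hfn <;>
            try (simp at hfn)
          rename_i f0
          refine Or.inr (Or.inr ⟨f0, rfl, ?_⟩)
          injection hfn with hfn; subst hfn
          rw [List.length_map] at har; simpa [extSigFO] using har

lemma isPPat_of_embed {t : Exp σ} (h : IsPPat (embedFO t)) : IsPPat t :=
  isPPat_of_embed_aux (esize t + 1) t (by omega) h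

end Lemmas2
section Lemmas3
variable {σ : Sig}

noncomputable def Deriv.tree {Q : Program σ} {e t : Exp σ} (h : Deriv Q e t) :
    DTree Q e t := Classical.choice h

lemma deriv_mono {Q Q' : Program σ} (hQ : Q ⊆ Q') {e t : Exp σ} (d : DTree Q e t) :
    Deriv Q' e t := by
  induction d with
  | bot e => exact ⟨.bot e⟩
  | rr x => exact ⟨.rr x⟩
  | dc h es ts hsym hlen hpat ds ih =>
      exact ⟨.dc h es ts hsym hlen hpat fun p hp => (ih p hp).tree⟩
  | opr r hr θ hθ es as t hlen ds d ih1 ih2 =>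
      exact ⟨.opr r (hQ hr) θ hθ es as t hlen (fun p hp => (ih1 p hp).tree) ih2.tree⟩

lemma deriv_self {Q : Program σ} {t : Exp σ} (h : IsPPat t) : Deriv Q t t := by
  induction h with
  | var x => exact ⟨.rr x⟩
  | bot => exact ⟨.bot _⟩
  | capp c ts har hts ih =>
      have key : ∀ p ∈ ts.zip ts, Deriv Q p.1 p.2 := by
        intro p hp
        obtain ⟨i, h1, h2, rfl⟩ := zip_mem_getElem hp
        exact ih _ (List.getElem_mem h1)
      exact ⟨.dc (.cn c) ts ts trivial rfl (.capp c ts har hts)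
        fun p hp => (key p hp).tree⟩
  | fapp f ts har hts ih =>
      have key : ∀ p ∈ ts.zip ts, Deriv Q p.1 p.2 := by
        intro p hp
        obtain ⟨i, h1, h2, rfl⟩ := zip_mem_getElem hp
        exact ih _ (List.getElem_mem h1)
      exact ⟨.dc (.fn f) ts ts trivial rfl (.fapp f ts har hts)
        fun p hp => (key p hp).tree⟩

lemma le_of_dtree {Q : Program σ} (hQ : ∀ r ∈ Q, σ.arityF r.fn ≤ r.lhs.length)
    {e t : Exp σ} (d : DTree Q e t) : IsPPat e → Le t e := by
  induction d with
  | bot e => exact fun _ => .bot e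
  | rr x => exact fun _ => .refl _
  | dc h es ts hsym hlen hpat ds ih =>
      intro he
      obtain ⟨hall, _⟩ := isPPat_spine (napp_of_symb hsym) he
      refine le_applyList (.refl h) hlen.symm fun i h1 h2 => ?_
      exact ih (es[i], ts[i]) (zip_getElem_mem h2 h1) (hall _ (List.getElem_mem h2))
  | opr r hr θ hθ es as t hlen ds d ih1 ih2 =>
      intro he
      exfalso
      obtain ⟨_, hc⟩ := isPPat_spine (by trivial) he
      rcases hc with ⟨hc, _⟩ | ⟨c, hc, _⟩ | ⟨f, hf, har⟩
      · rcases hc with ⟨x, hx⟩ | hx <;> simp at hx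
      · simp at hc
      · have hf' : r.fn = f := by injection hf
        have := hQ r hr
        rw [hf'] at this
        rw [List.length_append] at har
        omega

lemma deriv_le {Q : Program σ} {e p : Exp σ} (d : DTree Q e p) :
    ∀ t, Le t p → IsPPat t → Deriv Q e t := by
  induction d with
  | bot e =>
      intro t ht _
      rw [le_bot_inv ht]; exact ⟨.bot e⟩
  | rr x =>
      intro t ht _
      rcases le_var_inv ht with rfl | rfl
      · exact ⟨.bot _⟩
      · exact ⟨.rr x⟩
  | dc h es ts hsym hlen hpat ds ih =>
      intro t ht hp
      rcases le_spine (napp_of_symb hsym) ht hp with rfl | ⟨l, rfl, hlen2, hps⟩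
      · exact ⟨.bot _⟩
      · obtain ⟨hall, _⟩ := isPPat_spine (napp_of_symb hsym) hp
        have key : ∀ q ∈ es.zip l, Deriv Q q.1 q.2 := by
          intro q hq
          obtain ⟨i, h1, h2, rfl⟩ := zip_mem_getElem hq
          have h3 : i < ts.length := by omega
          exact (ih (es[i], ts[i]) (zip_getElem_mem h1 h3)) l[i] (hps i h2 h3)
            (hall _ (List.getElem_mem h2))
        exact ⟨.dc h es l hsym (by omega) hp fun q hq => (key q hq).tree⟩
  | opr r hr θ hθ es as t0 hlen ds d ih1 ih2 =>
      intro t ht hp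
      exact ⟨.opr r hr θ hθ es as t hlen ds (ih2 t ht hp).tree⟩

lemma isSymb_embed {h : Exp σ} (hs : IsSymb h) : IsSymb (embedFO h) := by
  cases h <;> trivial

lemma deriv_embed {P : Program σ} {e t : Exp σ} (d : DTree P e t) :
    Deriv (embedProgFO P) (embedFO e) (embedFO t) := by
  induction d with
  | bot e => exact ⟨.bot _⟩
  | rr x => exact ⟨.rr x⟩
  | dc h es ts hsym hlen hpat ds ih =>
      rw [embed_applyList, embed_applyList]
      have key : ∀ q ∈ (es.map embedFO).zip (ts.map embedFO),
          Deriv (embedProgFO P) q.1 q.2 := by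
        intro q hq
        obtain ⟨i, h1, h2, rfl⟩ := zip_mem_getElem hq
        rw [List.length_map] at h1 h2
        simp only [List.getElem_map]
        exact ih (es[i], ts[i]) (zip_getElem_mem h1 h2)
      exact ⟨.dc (embedFO h) (es.map embedFO) (ts.map embedFO) (isSymb_embed hsym)
        (by simp [hlen]) (by rw [← embed_applyList]; exact isPPat_embed hpat)
        fun q hq => (key q hq).tree⟩
  | opr r hr θ hθ es as t hlen ds d ih1 ih2 =>
      rw [embed_applyList, List.map_append]
      have key : ∀ q ∈ (es.map embedFO).zip
          ((embedRuleFO r).lhs.map (subst fun x => embedFO (θ x))),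
          Deriv (embedProgFO P) q.1 q.2 := by
        intro q hq
        obtain ⟨i, h1, h2, rfl⟩ := zip_mem_getElem hq
        rw [List.length_map] at h1
        simp only [List.length_map, embedRuleFO] at h2
        simp only [List.getElem_map, embedRuleFO]
        rw [← embed_subst]
        have h2' : i < (r.lhs.map (subst θ)).length := by simpa using h2
        have := ih1 (es[i], (r.lhs.map (subst θ))[i]) (zip_getElem_mem h1 h2')
        simp only [List.getElem_map] at this
        exact this
      have hd : DTree (embedProgFO P)
          (applyList (subst (fun x => embedFO (θ x)) (embedRuleFO r).rhs)
            (as.map embedFO)) (embedFO t) := by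
        show DTree _ (applyList (subst _ (embedFO r.rhs)) (as.map embedFO)) _
        rw [← embed_subst, ← embed_applyList]
        exact ih2.tree
      exact ⟨.opr (embedRuleFO r) (Set.mem_image_of_mem embedRuleFO hr)
        (fun x => embedFO (θ x)) (fun x => isPPat_embed (hθ x)) (es.map embedFO)
        (as.map embedFO) (embedFO t) (by simp [embedRuleFO, hlen])
        (fun q hq => (key q hq).tree) hd⟩

/-! ### hat lemmas -/

lemma hatFOAux_applyList (h : Exp σ) (l : List (Exp σ)) (n : ℕ) :
    hatFOAux (applyList h l) n = applyList (hatFOAux h (n + l.length)) (l.map hatFO) := by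
  induction l generalizing h n with
  | nil => simp [applyList]
  | cons a l ih =>
      rw [applyList_cons, ih]
      rfl

lemma hat_ne_bot (t : Exp σ) (n : ℕ) : hatFOAux t n ≠ .bot := by
  cases t <;> simp [hatFOAux]

lemma hat_ne_fn (t : Exp σ) (n : ℕ) (g : (extSigFO σ).FS) : hatFOAux t n ≠ .fn g := by
  cases t <;> simp [hatFOAux]

lemma isFOPat_hat {t : Exp σ} (h : IsPPat t) : IsFOPat (hatFO t) := by
  induction h with
  | var x => exact .var x
  | bot =>
      exact @IsFOPat.capp (extSigFO σ) (Sum.inl (Sum.inr ())) [] rfl (by simp)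
  | capp c ts har hts ih =>
      show IsFOPat (hatFOAux _ 0)
      rw [hatFOAux_applyList, Nat.zero_add]
      refine IsFOPat.capp (Sum.inr (Sum.inr c, ts.length)) (ts.map hatFO)
        (by rw [List.length_map] <;> simp [extSigFO]) ?_
      intro u hu; obtain ⟨v, hv, rfl⟩ := List.mem_map.1 hu; exact ih v hv
  | fapp f ts har hts ih =>
      show IsFOPat (hatFOAux _ 0)
      rw [hatFOAux_applyList, Nat.zero_add]
      refine IsFOPat.capp (Sum.inr (Sum.inl f, ts.length)) (ts.map hatFO)
        (by rw [List.length_map] <;> simp [extSigFO]) ?_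
      intro u hu; obtain ⟨v, hv, rfl⟩ := List.mem_map.1 hu; exact ih v hv

lemma isPPat_of_isFOPat {σ' : Sig} {t : Exp σ'} (h : IsFOPat t) : IsPPat t := by
  induction h with
  | var x => exact .var x
  | capp c ts har hts ih => exact .capp c ts (le_of_eq har) ih

end Lemmas3
section Lemmas4
variable {σ : Sig}

lemma pgfo_fn {r : Rule (extSigFO σ)} (hr : r ∈ PgFO σ) : ∃ u, r.fn = .inr u := by
  rcases hr with ⟨x, rfl⟩ | rfl | ⟨h, ts, _, rfl⟩
  · exact ⟨_, rfl⟩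
  · exact ⟨_, rfl⟩
  · exact ⟨_, rfl⟩

lemma pgfo_lhs_len {r : Rule (extSigFO σ)} (hr : r ∈ PgFO σ) : r.lhs.length = 1 := by
  rcases hr with ⟨x, rfl⟩ | rfl | ⟨h, ts, _, rfl⟩ <;> rfl

lemma isSymb_of_embed {h : Exp σ} (hs : IsSymb (embedFO h)) : IsSymb h := by
  cases h <;> trivial

lemma subst_embed_range {θ : ℕ → Exp (extSigFO σ)} : ∀ {p u : Exp σ},
    subst θ (embedFO p) = embedFO u → ∀ x ∈ occVars p, ∃ v, θ x = embedFO v := by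
  intro p
  induction p with
  | var y =>
      intro u h x hx
      simp [occVars] at hx
      subst hx
      exact ⟨u, h⟩
  | app a b iha ihb =>
      intro u h x hx
      cases u <;> simp only [embedFO, subst, Exp.app.injEq] at h <;> try (simp at h)
      rcases List.mem_append.1 hx with hx | hx
      · exact iha h.1 x hx
      · exact ihb h.2 x hx
  | fn f => intro u h x hx; simp [occVars] at hx
  | cn c => intro u h x hx; simp [occVars] at hx
  | bot => intro u h x hx; simp [occVars] at hx

lemma subst_embed_eq {θ : ℕ → Exp (extSigFO σ)} {θ₀ : ℕ → Exp σ} {p : Exp σ}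
    (h : ∀ x ∈ occVars p, θ x = embedFO (θ₀ x)) :
    subst θ (embedFO p) = embedFO (subst θ₀ p) := by
  rw [embed_subst]
  exact subst_congr (by rw [occVars_embed]; exact h)

lemma unzip_embed {P : Program σ} : ∀ (l₀ : List (Exp σ)) (ts : List (Exp (extSigFO σ))),
    l₀.length = ts.length →
    (∀ p ∈ (l₀.map embedFO).zip ts, ∀ a : Exp σ, p.1 = embedFO a →
      ∃ b, p.2 = embedFO b ∧ Deriv P a b) →
    ∃ ts₀ : List (Exp σ), ts = ts₀.map embedFO ∧
      ∀ p ∈ l₀.zip ts₀, Deriv P p.1 p.2 := by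
  intro l₀
  induction l₀ with
  | nil =>
      intro ts h1 _
      rw [List.length_nil] at h1
      rw [List.eq_nil_of_length_eq_zero h1.symm]
      exact ⟨[], rfl, by simp⟩
  | cons a l ihl =>
      intro ts h1 h2
      cases ts with
      | nil => simp at h1
      | cons b ts' =>
          have hmem : (embedFO a, b) ∈ ((a :: l).map embedFO).zip (b :: ts') := by
            simp [List.zip_cons_cons]
          obtain ⟨b₀, hb, hd⟩ := h2 (embedFO a, b) hmem a rfl
          have hb' : b = embedFO b₀ := hb
          obtain ⟨ts₀, hts, hds⟩ := ihl ts' (by simpa using h1)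
            (fun p hp a' ha' => h2 p
              (by simp only [List.map_cons, List.zip_cons_cons]
                  exact List.mem_cons_of_mem _ hp) a' ha')
          refine ⟨b₀ :: ts₀, by simp [hb', hts], ?_⟩
          intro p hp
          rw [List.zip_cons_cons] at hp
          rcases List.mem_cons.1 hp with rfl | hp
          · exact hd
          · exact hds p hp

lemma conserv {P : Program σ} (hP : WFProg P) {e' t' : Exp (extSigFO σ)}
    (d : DTree (embedProgFO P ∪ PgFO σ) e' t') :
    ∀ e₀ : Exp σ, e' = embedFO e₀ → ∃ t₀ : Exp σ, t' = embedFO t₀ ∧ Deriv P e₀ t₀ := by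
  induction d with
  | bot e => exact fun e₀ _ => ⟨.bot, rfl, ⟨.bot e₀⟩⟩
  | rr x =>
      intro e₀ he
      cases e₀ <;> simp only [embedFO, Exp.var.injEq] at he <;> try (simp at he)
      subst he
      exact ⟨.var _, rfl, ⟨.rr _⟩⟩
  | dc h es ts hsym hlen hpat ds ih =>
      intro e₀ he
      have hspine : embedFO e₀ = applyList (embedFO (sHead e₀)) ((sArgs e₀).map embedFO) := by
        rw [← embed_applyList, applyList_spine]
      rw [hspine] at he
      obtain ⟨hh, hes⟩ := applyList_inj (napp_of_symb hsym) (napp_embed (sHead_napp e₀)) he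
      subst hh; subst hes
      obtain ⟨ts₀, rfl, hds⟩ := unzip_embed (sArgs e₀) ts (by simpa using hlen)
        (fun p hp a ha => ih p hp a ha)
      refine ⟨applyList (sHead e₀) ts₀, by rw [embed_applyList], ?_⟩
      have hpat₀ : IsPPat (applyList (sHead e₀) ts₀) := by
        apply isPPat_of_embed
        rw [embed_applyList]
        exact hpat
      have key : ∀ p ∈ (sArgs e₀).zip ts₀, Deriv P p.1 p.2 := hds
      refine ⟨?_⟩
      have tr : DTree P (applyList (sHead e₀) (sArgs e₀)) (applyList (sHead e₀) ts₀) :=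
        .dc (sHead e₀) (sArgs e₀) ts₀ (isSymb_of_embed hsym)
          (by simpa using hlen) hpat₀ (fun p hp => (key p hp).tree)
      rwa [applyList_spine e₀] at tr
  | opr r hr θ hθ es as t hlen ds d ih1 ih2 =>
      intro e₀ he
      have hspine : embedFO e₀ = applyList (embedFO (sHead e₀)) ((sArgs e₀).map embedFO) := by
        rw [← embed_applyList, applyList_spine]
      rw [hspine] at he
      obtain ⟨hh, hes⟩ := applyList_inj (by trivial) (napp_embed (sHead_napp e₀)) he
      rcases hr with hre | hrg
      swap
      · exfalso
        obtain ⟨u, hu⟩ := pgfo_fn hrg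
        cases hh0 : sHead e₀ <;> rw [hh0] at hh <;> simp only [embedFO] at hh <;>
          try (simp at hh)
        rw [hu] at hh
        injection hh with hh; cases hh
      · obtain ⟨r₀, hr₀, rfl⟩ := hre
        -- head
        have hfn : (embedRuleFO r₀).fn = Sum.inl r₀.fn := rfl
        have hh0 : sHead e₀ = .fn r₀.fn := by
          have hh' := hh
          cases hX : sHead e₀ <;> rw [hX] at hh' <;> simp only [embedFO, hfn] at hh' <;>
            try (simp at hh')
          first
          | (injection hh' with h2; injection h2 with h3; rw [h3])
          | rw [hh']
        -- split arguments
        obtain ⟨l₁, l₂, hsp, hl₁, hl₂⟩ := List.map_eq_append_iff.1 hes.symm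
        subst hl₁
        subst hl₂
        have hlen1 : l₁.length = r₀.lhs.length := by
          simpa [embedRuleFO] using hlen
        -- pointwise premises
        have hprem : ∀ i (hi : i < r₀.lhs.length),
            ∃ u, subst θ (embedFO (r₀.lhs[i]'hi)) = embedFO u ∧
              Deriv P (l₁[i]'(by omega)) u := by
          intro i hi
          have h1 : i < (l₁.map embedFO).length := by
            simp [hlen1]; omega
          have h2 : i < ((embedRuleFO r₀).lhs.map (subst θ)).length := by
            simp [embedRuleFO]; omega
          have hmem := zip_getElem_mem (l := l₁.map embedFO)
            (l' := (embedRuleFO r₀).lhs.map (subst θ)) h1 h2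
          have hi1 : (l₁.map embedFO)[i]'h1 = embedFO (l₁[i]'(by simpa using h1)) := by
            simp
          obtain ⟨u, hu, hder⟩ := ih1 _ hmem _ hi1
          refine ⟨u, ?_, hder⟩
          have : ((embedRuleFO r₀).lhs.map (subst θ))[i]'h2 =
              subst θ (embedFO (r₀.lhs[i]'hi)) := by
            simp [embedRuleFO]
          rw [← this]
          exact hu
        -- good variables
        have hgood : ∀ x ∈ r₀.lhs.flatMap occVars, ∃ v, θ x = embedFO v := by
          intro x hx
          obtain ⟨p, hp, hxp⟩ := List.mem_flatMap.1 hx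
          obtain ⟨i, hi, rfl⟩ := List.mem_iff_getElem.1 hp
          obtain ⟨u, hu, _⟩ := hprem i hi
          exact subst_embed_range hu x hxp
        classical
        set θ₀ : ℕ → Exp σ := fun x =>
          if h : ∃ v, θ x = embedFO v then h.choose else .bot with hθ₀def
        have hθ₀good : ∀ x, (∃ v, θ x = embedFO v) → θ x = embedFO (θ₀ x) := by
          intro x hx
          rw [hθ₀def]
          simp only [dif_pos hx]
          exact hx.choose_spec
        have hθ₀ : PSub θ₀ := by
          intro x
          rw [hθ₀def]
          by_cases hx : ∃ v, θ x = embedFO v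
          · simp only [dif_pos hx]
            apply isPPat_of_embed
            rw [← hx.choose_spec]
            exact hθ x
          · simp only [dif_neg hx]
            exact .bot
        -- premise derivations in P
        have hprem₀ : ∀ i (hi : i < r₀.lhs.length),
            Deriv P (l₁[i]'(by omega)) (subst θ₀ (r₀.lhs[i]'hi)) := by
          intro i hi
          obtain ⟨u, hu, hder⟩ := hprem i hi
          have : subst θ (embedFO (r₀.lhs[i]'hi)) = embedFO (subst θ₀ (r₀.lhs[i]'hi)) := by
            apply subst_embed_eq
            intro x hx
            exact hθ₀good x (hgood x (List.mem_flatMap.2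
              ⟨r₀.lhs[i]'hi, List.getElem_mem hi, hx⟩))
          rw [this] at hu
          rw [embed_inj hu]
          exact hder
        -- inner derivation
        have hrhs : subst θ (embedFO r₀.rhs) = embedFO (subst θ₀ r₀.rhs) := by
          apply subst_embed_eq
          intro x hx
          exact hθ₀good x (hgood x ((hP r₀ hr₀).2 x hx))
        obtain ⟨t₀, rfl, hder₀⟩ := ih2 (applyList (subst θ₀ r₀.rhs) l₂) (by
          show applyList (subst θ ((embedRuleFO r₀).rhs)) (l₂.map embedFO) = _
          have hE : (embedRuleFO r₀).rhs = embedFO r₀.rhs := rfl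
          rw [hE, hrhs, ← embed_applyList])
        refine ⟨t₀, rfl, ⟨?_⟩⟩
        rw [← applyList_spine e₀, hh0, hsp]
        have key : ∀ p ∈ l₁.zip (r₀.lhs.map (subst θ₀)), Deriv P p.1 p.2 := by
          intro p hp
          obtain ⟨i, h1, h2, rfl⟩ := zip_mem_getElem hp
          have hi : i < r₀.lhs.length := by simpa using h2
          have := hprem₀ i hi
          simpa using this
        exact .opr r₀ hr₀ θ₀ hθ₀ l₁ l₂ t₀ hlen1 (fun p hp => (key p hp).tree)
          hder₀.tree

end Lemmas4
section Lemmas5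
variable {σ : Sig}

lemma arity_ok {P : Program σ} (hP : WFProg P) :
    ∀ r ∈ embedProgFO P ∪ PgFO σ, (extSigFO σ).arityF r.fn ≤ r.lhs.length := by
  intro r hr
  rcases hr with ⟨r₀, hr₀, rfl⟩ | hrg
  · have hwf := (hP r₀ hr₀).1.1
    simp [embedRuleFO, extSigFO, hwf] <;> exact le_of_eq (hwf.symm.trans (List.length_map _).symm)
  · obtain ⟨u, hu⟩ := pgfo_fn hrg
    rw [pgfo_lhs_len hrg, hu]
    simp [extSigFO]

lemma symExp_napp (h : σ.FS ⊕ σ.CS) : NApp (symExp h) := by cases h <;> trivial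

lemma symExp_isSymb (h : σ.FS ⊕ σ.CS) : IsSymb (symExp h) := by cases h <;> trivial

lemma symExp_inj {h h' : σ.FS ⊕ σ.CS} (he : symExp h = symExp h') : h = h' := by
  cases h <;> cases h' <;> simp only [symExp, Sum.elim_inl, Sum.elim_inr] at he <;>
    try (simp at he)
  all_goals exact congrArg _ he

lemma applyList_symExp_ne_var (h : σ.FS ⊕ σ.CS) (ts : List (Exp σ)) (x : ℕ) :
    applyList (symExp h) ts ≠ .var x := by
  intro he
  have := congrArg sHead he
  rw [sHead_applyList, sHead_eq_self (symExp_napp h)] at this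
  cases h <;> simp [symExp, sHead] at this

lemma applyList_symExp_ne_bot (h : σ.FS ⊕ σ.CS) (ts : List (Exp σ)) :
    applyList (symExp h) ts ≠ .bot := by
  intro he
  have := congrArg sHead he
  rw [sHead_applyList, sHead_eq_self (symExp_napp h)] at this
  cases h <;> simp [symExp, sHead] at this

lemma hat_symExp (h : σ.FS ⊕ σ.CS) (n : ℕ) :
    hatFOAux (symExp h) n = .cn (Sum.inr (h, n)) := by
  cases h <;> rfl

lemma hat_applyList_symExp (h : σ.FS ⊕ σ.CS) (ts : List (Exp σ)) :
    hatFO (applyList (symExp h) ts) =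
      applyList (.cn (Sum.inr (h, ts.length))) (ts.map hatFO) := by
  show hatFOAux _ 0 = _
  rw [hatFOAux_applyList, Nat.zero_add, hat_symExp]

lemma subst_embed_symExp (θ : ℕ → Exp (extSigFO σ)) (h : σ.FS ⊕ σ.CS) :
    subst θ (embedFO (symExp h)) = embedFO (symExp h) := by
  cases h <;> rfl

/-- Inversion of a derivation whose source is `g_t q` and whose target is
neither `⊥` nor a function symbol. -/
lemma g_inversion {P : Program σ} {t : Exp σ} {q T : Exp (extSigFO σ)}
    (hT1 : ∀ g, T ≠ .fn g) (hT2 : T ≠ .bot)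
    (d : DTree (embedProgFO P ∪ PgFO σ) (.app (gEFO t) q) T) :
    ∃ (r : Rule (extSigFO σ)) (θ : ℕ → Exp (extSigFO σ)) (l0 : Exp (extSigFO σ)),
      r ∈ PgFO σ ∧ r.fn = Sum.inr t ∧ r.lhs = [l0] ∧ PSub θ ∧
      Deriv (embedProgFO P ∪ PgFO σ) q (subst θ l0) ∧
      Deriv (embedProgFO P ∪ PgFO σ) (subst θ r.rhs) T := by
  have hsrc : Exp.app (gEFO t) q = applyList (.fn (Sum.inr t)) [q] := rfl
  rw [hsrc] at d
  generalize hgen : applyList (Exp.fn (Sum.inr t)) [q] = S at d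
  cases d with
  | bot => exact absurd rfl hT2
  | rr x => exact absurd hgen (by simp [applyList])
  | dc h es ts hsym hlen hpat ds =>
      exfalso
      obtain ⟨h1, h2⟩ := applyList_inj (by trivial) (napp_of_symb hsym) hgen
      subst h1
      subst h2
      obtain ⟨_, hc⟩ := isPPat_spine (by trivial) hpat
      rcases hc with ⟨hc, _⟩ | ⟨c, hc, _⟩ | ⟨f, hf, har⟩
      · rcases hc with ⟨x, hx⟩ | hx <;> simp at hx
      · simp at hc
      · have hf' : f = Sum.inr t := by injection hf.symm
        subst hf'
        have : ts.length = 0 := by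
          simpa [extSigFO] using har
        have hnil : ts = [] := List.eq_nil_of_length_eq_zero this
        subst hnil
        exact hT1 _ rfl
  | opr r hr θ hθ es as t0 hlen ds dd =>
      obtain ⟨hfn, hargs⟩ := applyList_inj (by trivial) (by trivial) hgen
      have hfn' : r.fn = Sum.inr t := by injection hfn.symm
      rcases hr with hre | hrg
      · exfalso
        obtain ⟨r₀, _, rfl⟩ := hre
        have : (embedRuleFO r₀).fn = Sum.inl r₀.fn := rfl
        rw [this] at hfn'
        simp at hfn'
      · have hlen1 : es.length = 1 := by rw [hlen, pgfo_lhs_len hrg]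
        obtain ⟨e1, rfl⟩ := List.length_eq_one_iff.1 hlen1
        have he1 : e1 = q ∧ as = [] := by
          have h3 : [q] = e1 :: as := hargs
          simp at h3
          exact ⟨h3.1.symm, h3.2⟩
        obtain ⟨he2, rfl⟩ := he1
        subst he2
        obtain ⟨l0, hl0⟩ := List.length_eq_one_iff.1 (pgfo_lhs_len hrg)
        refine ⟨r, θ, l0, hrg, hfn', hl0, hθ, ⟨?_⟩, ⟨dd⟩⟩
        exact ds (_, _) (by rw [hl0]; simp)

/-- Forward direction, application case. -/
lemma forward_app {P : Program σ} {h : σ.FS ⊕ σ.CS} {ts : List (Exp σ)}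
    (hpat : IsPPat (applyList (symExp h) ts))
    (ih : ∀ a ∈ ts, ∀ e : Exp σ, Deriv P e a →
      Deriv (embedProgFO P ∪ PgFO σ) (.app (gEFO a) (embedFO e)) (hatFO a))
    (e : Exp σ) (hd : Deriv P e (applyList (symExp h) ts)) :
    Deriv (embedProgFO P ∪ PgFO σ) (.app (gEFO (applyList (symExp h) ts)) (embedFO e))
      (hatFO (applyList (symExp h) ts)) := by
  classical
  set P' := embedProgFO P ∪ PgFO σ with hP'
  have hts : ∀ a ∈ ts, IsPPat a := (isPPat_spine (symExp_napp h) hpat).1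
  set m := ts.length with hm
  set θ : ℕ → Exp (extSigFO σ) :=
    fun i => if hi : i < ts.length then embedFO (ts[i]'hi) else .bot with hθdef
  have hθ : PSub θ := by
    intro x
    rw [hθdef]
    by_cases hx : x < ts.length
    · simp only [dif_pos hx]
      exact isPPat_embed (hts _ (List.getElem_mem hx))
    · simp only [dif_neg hx]
      exact .bot
  -- the instantiated left-hand side is `embed t`
  have hlhs : subst θ (applyList (embedFO (symExp h)) ((List.range ts.length).map .var)) =
      embedFO (applyList (symExp h) ts) := by
    rw [subst_applyList, subst_embed_symExp, embed_applyList]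
    congr 1
    apply List.ext_getElem (by simp)
    intro i h1 h2
    simp only [List.getElem_map, List.getElem_range]
    show subst θ (.var i) = _
    have hi : i < ts.length := by simpa using h2
    show θ i = _
    rw [hθdef]
    simp only [dif_pos hi]
  -- premise derivation
  have hprem : Deriv P' (embedFO e) (subst θ (applyList (embedFO (symExp h))
      ((List.range ts.length).map .var))) := by
    rw [hlhs]
    exact deriv_mono Set.subset_union_left (deriv_embed hd.tree).tree
  -- the instantiated right-hand side
  have hsub : subst θ (gAppRuleFO h ts).rhs =
      applyList (.cn (Sum.inr (h, ts.length)))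
        (ts.map fun ti => .app (gEFO ti) (embedFO ti)) := by
    show subst θ (applyList (Exp.cn (Sum.inr (h, ts.length)) : Exp (extSigFO σ))
      (ts.mapIdx fun i ti => Exp.app (gEFO ti) (Exp.var i))) = _
    rw [subst_applyList]
    show applyList (Exp.cn (Sum.inr (h, ts.length)) : Exp (extSigFO σ)) _ = _
    congr 1
    apply List.ext_getElem (by simp)
    intro i h1 h2
    simp only [List.getElem_map, List.getElem_mapIdx]
    have hi : i < ts.length := by simpa using h2
    show Exp.app (subst θ (gEFO ts[i])) (θ i) = _
    have h3 : subst θ (gEFO (ts[i]'hi)) = gEFO (ts[i]'hi) := rfl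
    rw [h3, hθdef]
    simp only [dif_pos hi]
  -- derivation for the right-hand side
  have hdr : Deriv P' (subst θ (gAppRuleFO h ts).rhs)
      (hatFO (applyList (symExp h) ts)) := by
    rw [hsub, hat_applyList_symExp]
    have key : ∀ p ∈ (ts.map fun ti => Exp.app (gEFO ti) (embedFO ti)).zip
        (ts.map hatFO), Deriv P' p.1 p.2 := by
      intro p hp
      obtain ⟨i, h1, h2, rfl⟩ := zip_mem_getElem hp
      simp only [List.getElem_map]
      have hi : i < ts.length := by simpa using h1
      exact ih (ts[i]'hi) (List.getElem_mem hi) (ts[i]'hi)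
        (deriv_self (hts _ (List.getElem_mem hi)))
    have hpat2 : IsPPat (applyList (Exp.cn (Sum.inr (h, ts.length)) : Exp (extSigFO σ))
        (ts.map hatFO)) := by
      refine IsPPat.capp _ _ (by rw [List.length_map] <;> simp [extSigFO]) ?_
      intro u hu
      obtain ⟨v, hv, rfl⟩ := List.mem_map.1 hu
      exact isPPat_of_isFOPat (isFOPat_hat (hts v hv))
    exact ⟨.dc (.cn (Sum.inr (h, ts.length))) _ _ trivial (by simp) hpat2
      (fun p hp => (key p hp).tree)⟩
  -- assemble
  have hrule : gAppRuleFO h ts ∈ PgFO σ := Or.inr (Or.inr ⟨h, ts, hpat, rfl⟩)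
  refine ⟨?_⟩
  have tr : DTree P' (applyList (.fn (gAppRuleFO h ts).fn) ([embedFO e] ++ []))
      (hatFO (applyList (symExp h) ts)) :=
    .opr (gAppRuleFO h ts) (Or.inr hrule) θ hθ [embedFO e] []
      (hatFO (applyList (symExp h) ts)) rfl
      (fun p hp => by
        have hp' : p = (embedFO e, subst θ (applyList (embedFO (symExp h))
            ((List.range ts.length).map .var))) := by
          simpa [gAppRuleFO] using hp
        rw [hp']
        exact hprem.tree)
      hdr.tree
  exact tr

/-- Forward direction. -/
lemma forwardG {P : Program σ} {t : Exp σ} (ht : IsPPat t) :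
    ∀ e : Exp σ, Deriv P e t →
      Deriv (embedProgFO P ∪ PgFO σ) (.app (gEFO t) (embedFO e)) (hatFO t) := by
  induction ht with
  | var x =>
      intro e hd
      have hprem : Deriv (embedProgFO P ∪ PgFO σ) (embedFO e) (.var x) :=
        deriv_mono Set.subset_union_left (deriv_embed hd.tree).tree
      refine ⟨?_⟩
      have tr : DTree (embedProgFO P ∪ PgFO σ)
          (applyList (.fn (Sum.inr (Exp.var x))) ([embedFO e] ++ []))
          ((Exp.var x : Exp (extSigFO σ))) :=
        .opr ⟨Sum.inr (Exp.var x), [.var 0], .var 0⟩ (Or.inr (Or.inl ⟨x, rfl⟩))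
          (fun _ => .var x) (fun _ => .var x) [embedFO e] [] (.var x) rfl
          (fun p hp => by
            have hp' : p = (embedFO e, (.var x : Exp (extSigFO σ))) := by simpa [subst] using hp
            rw [hp']
            exact hprem.tree)
          (.rr x)
      exact tr
  | bot =>
      intro e _
      refine ⟨?_⟩
      have hpat2 : IsPPat (applyList (Exp.cn (Sum.inl (Sum.inr ())) : Exp (extSigFO σ)) []) :=
        .capp _ [] (by simp [extSigFO]) (by simp)
      have tr : DTree (embedProgFO P ∪ PgFO σ)
          (applyList (.fn (Sum.inr Exp.bot)) ([embedFO e] ++ []))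
          ((Exp.cn (Sum.inl (Sum.inr ())) : Exp (extSigFO σ))) :=
        .opr ⟨Sum.inr Exp.bot, [.var 0], .cn (Sum.inl (Sum.inr ()))⟩
          (Or.inr (Or.inr (Or.inl rfl)))
          (fun _ => .bot) (fun _ => .bot) [embedFO e] [] _ rfl
          (fun p hp => by
            have hp' : p = (embedFO e, (.bot : Exp (extSigFO σ))) := by simpa [subst] using hp
            rw [hp']
            exact .bot _)
          (.dc ((.cn (Sum.inl (Sum.inr ()))) : Exp (extSigFO σ)) [] [] trivial rfl hpat2
            (fun p hp => absurd hp (by simp)))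
      exact tr
  | capp c ts har hts ih =>
      exact forward_app (h := Sum.inr c) (.capp c ts har hts) ih
  | fapp f ts har hts ih =>
      exact forward_app (h := Sum.inl f) (.fapp f ts har hts) ih

end Lemmas5
section Lemmas6
variable {σ : Sig}

lemma le_var_right {u : Exp σ} {x : ℕ} (h : Le (.var x) u) : u = .var x := by
  cases h <;> rfl

lemma sHead_applyList_self {h : Exp σ} (hh : NApp h) (l : List (Exp σ)) :
    sHead (applyList h l) = h := by
  rw [sHead_applyList, sHead_eq_self hh]

lemma applyList_cn_ne_var {σ' : Sig} (c : σ'.CS) (l : List (Exp σ')) (x : ℕ) :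
    applyList (Exp.cn c) l ≠ .var x := by
  intro he
  have := congrArg sHead he
  rw [sHead_applyList_self (by trivial)] at this
  simp [sHead] at this

lemma applyList_cn_ne_fn {σ' : Sig} (c : σ'.CS) (l : List (Exp σ')) (g : σ'.FS) :
    applyList (Exp.cn c) l ≠ .fn g := by
  intro he
  have := congrArg sHead he
  rw [sHead_applyList_self (by trivial)] at this
  simp [sHead] at this

lemma applyList_cn_ne_bot {σ' : Sig} (c : σ'.CS) (l : List (Exp σ')) :
    applyList (Exp.cn c) l ≠ .bot := by
  intro he
  have := congrArg sHead he
  rw [sHead_applyList_self (by trivial)] at this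
  simp [sHead] at this

/-- Inversion of a derivation with constructor-rooted source. -/
lemma cn_inversion {σ' : Sig} {Q : Program σ'} {c : σ'.CS} {es : List (Exp σ')}
    {T : Exp σ'} (hT : T ≠ .bot) (d : DTree Q (applyList (.cn c) es) T) :
    ∃ ts, T = applyList (.cn c) ts ∧ es.length = ts.length ∧
      IsPPat T ∧ ∀ p ∈ es.zip ts, Deriv Q p.1 p.2 := by
  generalize hg : applyList (Exp.cn c) es = S at d
  cases d with
  | bot => exact absurd rfl hT
  | rr x => exact absurd hg (applyList_cn_ne_var c es x)
  | dc h es' ts hsym hlen hpat ds =>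
      obtain ⟨h1, h2⟩ := applyList_inj (by trivial) (napp_of_symb hsym) hg
      subst h1
      subst h2
      exact ⟨ts, rfl, hlen, hpat, fun p hp => ⟨ds p hp⟩⟩
  | opr r hr θ hθ es' as t0 hlen ds dd =>
      exfalso
      have := congrArg sHead hg
      rw [sHead_applyList_self (by trivial), sHead_applyList_self (by trivial)] at this
      simp at this

/-- Backward direction, application case. -/
lemma backward_app {P : Program σ} (hP : WFProg P) {h : σ.FS ⊕ σ.CS} {ts : List (Exp σ)}
    (hpat : IsPPat (applyList (symExp h) ts))
    (ih : ∀ a ∈ ts, ∀ q : Exp (extSigFO σ),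
      Deriv (embedProgFO P ∪ PgFO σ) (.app (gEFO a) q) (hatFO a) →
      Deriv (embedProgFO P ∪ PgFO σ) q (embedFO a))
    (q : Exp (extSigFO σ))
    (hd : Deriv (embedProgFO P ∪ PgFO σ) (.app (gEFO (applyList (symExp h) ts)) q)
      (hatFO (applyList (symExp h) ts))) :
    Deriv (embedProgFO P ∪ PgFO σ) q (embedFO (applyList (symExp h) ts)) := by
  classical
  have hts : ∀ a ∈ ts, IsPPat a := (isPPat_spine (symExp_napp h) hpat).1
  obtain ⟨d⟩ := hd
  rw [hat_applyList_symExp] at d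
  obtain ⟨r, θ, l0, hrg, hfn, hl0, hθ, hprem, hrhs⟩ :=
    g_inversion (fun g => applyList_cn_ne_fn _ _ g) (applyList_cn_ne_bot _ _) d
  rcases hrg with ⟨x', hx'⟩ | hbot | ⟨h', ts', hp', hgr⟩
  · exfalso
    subst hx'
    have h1 : Exp.var x' = applyList (symExp h) ts := by
      have : (Sum.inr (Exp.var x') : (extSigFO σ).FS) = Sum.inr (applyList (symExp h) ts) := hfn
      injection this
    exact applyList_symExp_ne_var h ts x' h1.symm
  · exfalso
    subst hbot
    have h1 : Exp.bot = applyList (symExp h) ts := by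
      have : (Sum.inr (Exp.bot : Exp σ) : (extSigFO σ).FS) = Sum.inr (applyList (symExp h) ts) := hfn
      injection this
    exact applyList_symExp_ne_bot h ts h1.symm
  · subst hgr
    have h1 : applyList (symExp h') ts' = applyList (symExp h) ts := by
      have : (Sum.inr (applyList (symExp h') ts') : (extSigFO σ).FS) =
          Sum.inr (applyList (symExp h) ts) := hfn
      injection this
    obtain ⟨h2, h3⟩ := applyList_inj (symExp_napp h') (symExp_napp h) h1
    have h4 := symExp_inj h2
    subst h4
    subst h3
    -- identify l0
    have hl0' : l0 = applyList (embedFO (symExp h')) ((List.range ts'.length).map .var) := by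
      have hL : (gAppRuleFO h' ts').lhs =
          [applyList (embedFO (symExp h')) ((List.range ts'.length).map .var)] := rfl
      rw [hL] at hl0
      injection hl0 with ha _
      exact ha.symm
    subst hl0'
    -- compute the instantiated rhs
    have hsub : subst θ (gAppRuleFO h' ts').rhs =
        applyList (.cn (Sum.inr (h', ts'.length)))
          ((ts'.mapIdx fun i ti => Exp.app (gEFO ti) (Exp.var i)).map (subst θ)) := by
      show subst θ (applyList (Exp.cn (Sum.inr (h', ts'.length)) : Exp (extSigFO σ))
        (ts'.mapIdx fun i ti => Exp.app (gEFO ti) (Exp.var i))) = _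
      rw [subst_applyList]
      rfl
    rw [hsub] at hrhs
    obtain ⟨ts2, hts2, hlen2, _, hds⟩ := cn_inversion (applyList_cn_ne_bot _ _) hrhs.tree
    obtain ⟨_, hts2'⟩ := applyList_inj (by trivial) (by trivial) hts2
    -- pointwise: Le (embed ts'[i]) (θ i)
    have hles : ∀ i (hi : i < ts'.length), Le (embedFO (ts'[i]'hi)) (θ i) := by
      intro i hi
      have h5 : i < ((ts'.mapIdx fun i ti => Exp.app (gEFO ti) (Exp.var i)).map
          (subst θ)).length := by simp; omega
      have h6 : i < ts2.length := by
        rw [← hlen2]; simpa using h5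
      have hder := hds _ (zip_getElem_mem h5 h6)
      have he5 : ((ts'.mapIdx fun i ti => Exp.app (gEFO ti) (Exp.var i)).map
          (subst θ))[i]'h5 = Exp.app (gEFO (ts'[i]'hi)) (θ i) := by
        simp only [List.getElem_map, List.getElem_mapIdx]
        rfl
      have he6 : ts2[i]'h6 = hatFO (ts'[i]'hi) := by
        have hge := List.getElem_of_eq hts2'.symm h6
        rw [hge]
        simp
      rw [he5, he6] at hder
      have hder2 := ih (ts'[i]'hi) (List.getElem_mem hi) (θ i) hder
      exact le_of_dtree (arity_ok hP) hder2.tree (hθ i)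
    -- assemble via monotonicity
    have hle : Le (embedFO (applyList (symExp h') ts'))
        (subst θ (applyList (embedFO (symExp h')) ((List.range ts'.length).map .var))) := by
      rw [embed_applyList, subst_applyList, subst_embed_symExp]
      refine le_applyList (.refl _) (by simp) ?_
      intro i h1 h2
      simp only [List.getElem_map, List.getElem_range]
      have hi : i < ts'.length := by simpa using h1
      show Le (embedFO (ts'[i]'hi)) (θ i)
      exact hles i hi
    exact deriv_le hprem.tree _ hle (isPPat_embed hpat)

/-- Backward direction. -/
lemma backwardH {P : Program σ} (hP : WFProg P) {t : Exp σ} (ht : IsPPat t) :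
    ∀ q : Exp (extSigFO σ),
      Deriv (embedProgFO P ∪ PgFO σ) (.app (gEFO t) q) (hatFO t) →
      Deriv (embedProgFO P ∪ PgFO σ) q (embedFO t) := by
  induction ht with
  | bot => exact fun q _ => ⟨.bot q⟩
  | var x =>
      intro q hd
      obtain ⟨r, θ, l0, hrg, hfn, hl0, hθ, hprem, hrhs⟩ :=
        g_inversion (fun g => hat_ne_fn _ _ g) (hat_ne_bot _ _) hd.tree
      rcases hrg with ⟨x', hx'⟩ | hbot | ⟨h', ts', hp', hgr⟩
      · subst hx'
        have h1 : (Exp.var x' : Exp σ) = Exp.var x := by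
          have h0 : (Sum.inr (Exp.var x' : Exp σ) : (extSigFO σ).FS) =
              Sum.inr (Exp.var x) := hfn
          injection h0
        injection h1 with h2
        subst h2
        have hl0' : l0 = .var 0 := by
          have hL : (⟨Sum.inr (Exp.var x' : Exp σ), [.var 0], .var 0⟩ :
              Rule (extSigFO σ)).lhs = [.var 0] := rfl
          rw [hL] at hl0
          injection hl0 with ha _
          exact ha.symm
        subst hl0'
        have hle := le_of_dtree (arity_ok hP) hrhs.tree (hθ 0)
        have heq : subst θ (Exp.var 0 : Exp (extSigFO σ)) = Exp.var x' :=
          le_var_right hle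
        rw [heq] at hprem
        exact hprem
      · exfalso
        subst hbot
        have h1 : (Exp.bot : Exp σ) = Exp.var x := by
          have h0 : (Sum.inr (Exp.bot : Exp σ) : (extSigFO σ).FS) = Sum.inr (Exp.var x) := hfn
          injection h0
        simp at h1
      · exfalso
        subst hgr
        have h1 : applyList (symExp h') ts' = Exp.var x := by
          have : (Sum.inr (applyList (symExp h') ts') : (extSigFO σ).FS) =
              Sum.inr (Exp.var x) := hfn
          injection this
        exact applyList_symExp_ne_var h' ts' x h1
  | capp c ts har hts ih =>
      exact fun q hd => backward_app hP (h := Sum.inr c) (.capp c ts har hts) ih q hd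
  | fapp f ts har hts ih =>
      exact fun q hd => backward_app hP (h := Sum.inl f) (.fapp f ts har hts) ih q hd

/-! ### safe extension -/

lemma embed_fn_inl (e : Exp σ) : ∀ g ∈ expFS (embedFO e), ∃ f, g = Sum.inl f := by
  induction e with
  | var x => intro g hg; simp [embedFO, expFS] at hg
  | fn f =>
      intro g hg
      simp only [embedFO, expFS, Set.mem_singleton_iff] at hg
      exact ⟨f, hg⟩
  | cn c => intro g hg; simp [embedFO, expFS] at hg
  | bot => intro g hg; simp [embedFO, expFS] at hg
  | app a b iha ihb =>
      intro g hg
      simp only [embedFO, expFS, Set.mem_union] at hg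
      rcases hg with hg | hg
      · exact iha g hg
      · exact ihb g hg

lemma embedProg_FS_inl {P : Program σ} :
    ∀ g ∈ progFS (embedProgFO P), ∃ f, g = Sum.inl f := by
  intro g hg
  simp only [progFS, Set.mem_iUnion] at hg
  obtain ⟨r, hr, hgr⟩ := hg
  obtain ⟨r₀, hr₀, rfl⟩ := hr
  simp only [ruleFS, embedRuleFO, Set.mem_insert_iff, Set.mem_union, Set.mem_iUnion] at hgr
  rcases hgr with rfl | ⟨_, ⟨u, rfl⟩, hgu⟩ | hgu
  · exact ⟨r₀.fn, rfl⟩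
  · obtain ⟨hu, hgu⟩ := Set.mem_iUnion.1 hgu
    obtain ⟨v, hv, rfl⟩ := List.mem_map.1 hu
    exact embed_fn_inl v g hgu
  · exact embed_fn_inl r₀.rhs g hgu

lemma pgfo_defs_inr : ∀ g ∈ defs (PgFO σ), ∃ u, g = Sum.inr u := by
  intro g hg
  obtain ⟨r, hr, rfl⟩ := hg
  exact pgfo_fn hr

end Lemmas6
/-- **First-order pattern probing lemma**: `t̂` is always a first-order pattern,
`P' = P ⊎ P_{g_t}` is a safe extension of `(P, e)` and, for every expression
`e` and partial pattern `t` built with the signature of `P`,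
`t ∈ ⟦e⟧^P` iff `t̂ ∈ ⟦g_t e⟧^{P'}`. -/
theorem pattern_probing_FO (σ : Sig) (P : Program σ) (hP : WFProg P) :
    (∀ t : Exp σ, IsPPat t → IsFOPat (hatFO t)) ∧
    (∀ e : Exp σ, SafeExt (embedProgFO P) (embedProgFO P ∪ PgFO σ) (embedFO e)) ∧
    (∀ (e t : Exp σ), IsPPat t →
      (t ∈ den P e ↔
        hatFO t ∈ den (embedProgFO P ∪ PgFO σ) (Exp.app (gEFO t) (embedFO e)))) := by
  refine ⟨fun t ht => isFOPat_hat ht, fun e => ⟨PgFO σ, rfl, ?_, ?_⟩, fun e t ht => ?_⟩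
  · rw [Set.disjoint_left]
    intro r hr1 hr2
    obtain ⟨r₀, _, rfl⟩ := hr1
    obtain ⟨u, hu⟩ := pgfo_fn hr2
    have hE : (embedRuleFO r₀).fn = Sum.inl r₀.fn := rfl
    rw [hE] at hu
    simp at hu
  · rw [Set.disjoint_left]
    intro g hg1 hg2
    obtain ⟨u, rfl⟩ := pgfo_defs_inr g hg1
    rcases hg2 with hg2 | hg2
    · obtain ⟨f, hf⟩ := embed_fn_inl e _ hg2
      simp at hf
    · obtain ⟨f, hf⟩ := embedProg_FS_inl _ hg2
      simp at hf
  · constructor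
    · rintro ⟨htp, hder⟩
      exact ⟨isPPat_of_isFOPat (isFOPat_hat ht), forwardG ht e hder⟩
    · rintro ⟨_, hder⟩
      refine ⟨ht, ?_⟩
      have h1 := backwardH hP ht (embedFO e) hder
      obtain ⟨t₀, ht₀, hd₀⟩ := conserv hP h1.tree e rfl
      rw [embed_inj ht₀]
      exact hd₀
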